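/- For an odd prime p, the sum over k from 1 to p-1 of ⌊k^p / p⌋ is congruent to (p+1)/2 modulo p. -/

import Mathlib

theorem stmt_5 (p : ℕ) (hp : p.Prime) (hodd : Odd p) :
    (∑ k ∈ Finset.Icc 1 (p - 1), ⌊(k : ℚ) ^ p / (p : ℚ)⌋) ≡ ((p : ℤ) + 1) / 2 [ZMOD (p : ℤ)] := by
  haveI : Fact p.Prime := ⟨hp⟩
  have hp0 : 0 < p := hp.pos
  have hIcc : Finset.Icc 1 (p - 1) = Finset.Ico 1 p := by
    rw [← Finset.Ico_add_one_right_eq_Icc]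
    congr 1
    omega
  set S : ℤ := ∑ k ∈ Finset.Icc 1 (p - 1), ⌊(k : ℚ) ^ p / (p : ℚ)⌋ with hSdef
  -- Step A: p * floor(k^p/p) = k^p - k
  have hterm : ∀ k ∈ Finset.Ico 1 p, (p : ℤ) * ⌊(k : ℚ) ^ p / (p : ℚ)⌋ = (k : ℤ) ^ p - k := by
    intro k hk
    simp only [Finset.mem_Ico] at hk
    have hdvd : (p : ℤ) ∣ (k : ℤ) ^ p - k := by
      have h0 : (((k : ℤ) ^ p - k : ℤ) : ZMod p) = 0 := by
        push_cast
        rw [ZMod.pow_card]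
        ring
      exact (ZMod.intCast_zmod_eq_zero_iff_dvd _ p).mp h0
    obtain ⟨m, hm⟩ := hdvd
    have hpQ : (0 : ℚ) < p := by exact_mod_cast hp0
    have hkQ : ((k : ℚ)) ^ p = (p : ℚ) * m + k := by
      have h1 : ((k : ℤ)) ^ p = p * m + k := by linarith [hm]
      exact_mod_cast congrArg (fun x : ℤ => (x : ℚ)) h1
    have hxe : ((k : ℚ)) ^ p / p = (m : ℚ) + (k : ℚ) / p := by
      rw [hkQ]; field_simp
    have hfl0 : ⌊(k : ℚ) / p⌋ = 0 := by
      rw [Int.floor_eq_zero_iff]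
      constructor
      · positivity
      · rw [div_lt_one hpQ]; exact_mod_cast hk.2
    rw [hxe, Int.floor_intCast_add, hfl0, add_zero, hm]
  have hA : (p : ℤ) * S = ∑ k ∈ Finset.Ico 1 p, ((k : ℤ) ^ p - k) := by
    rw [hSdef, hIcc, Finset.mul_sum]
    exact Finset.sum_congr rfl hterm
  -- pairing: p^2 ∣ (p-k)^p + k^p
  have hpair : ∀ k : ℤ, ((p : ℤ)) ^ 2 ∣ ((p : ℤ) - k) ^ p + k ^ p := by
    intro k
    have hexp : ((p : ℤ) - k) ^ p
        = ∑ m ∈ Finset.range (p + 1), (p : ℤ) ^ m * (-k) ^ (p - m) * (p.choose m) := by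
      rw [sub_eq_add_neg, add_pow]
    rw [hexp, Finset.sum_range_succ']
    simp only [pow_zero, one_mul, Nat.sub_zero, Nat.choose_zero_right, Nat.cast_one, mul_one]
    rw [hodd.neg_pow]
    have he : (∑ i ∈ Finset.range p,
        (p : ℤ) ^ (i + 1) * (-k) ^ (p - (i + 1)) * (p.choose (i + 1))) + -k ^ p + k ^ p
        = ∑ i ∈ Finset.range p, (p : ℤ) ^ (i + 1) * (-k) ^ (p - (i + 1)) * (p.choose (i + 1)) := by
      ring
    rw [he]
    apply Finset.dvd_sum
    intro i _
    match i with
    | 0 =>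
      rw [Nat.choose_one_right]
      exact ⟨(-k) ^ (p - 1), by push_cast; ring⟩
    | (j + 1) =>
      exact Dvd.dvd.mul_right (Dvd.dvd.mul_right (pow_dvd_pow _ (by omega)) _) _
  -- reflection
  have hrefl : ∑ k ∈ Finset.Ico 1 p, ((p : ℤ) - (k : ℤ)) ^ p
      = ∑ k ∈ Finset.Ico 1 p, (k : ℤ) ^ p := by
    apply Finset.sum_nbij' (fun k => p - k) (fun k => p - k)
    · intro a ha; simp only [Finset.mem_Ico] at *; omega
    · intro a ha; simp only [Finset.mem_Ico] at *; omega
    · intro a ha; simp only [Finset.mem_Ico] at *; omega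
    · intro a ha; simp only [Finset.mem_Ico] at *; omega
    · intro a ha
      simp only [Finset.mem_Ico] at ha
      rw [Nat.cast_sub (by omega)]
  have hpow : (p : ℤ) ^ 2 ∣ 2 * ∑ k ∈ Finset.Ico 1 p, (k : ℤ) ^ p := by
    have h2 : 2 * ∑ k ∈ Finset.Ico 1 p, (k : ℤ) ^ p
        = ∑ k ∈ Finset.Ico 1 p, (((p : ℤ) - (k : ℤ)) ^ p + (k : ℤ) ^ p) := by
      rw [Finset.sum_add_distrib, hrefl]; ring
    rw [h2]
    exact Finset.dvd_sum fun k _ => hpair k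
  -- Gauss sum
  have hgauss : 2 * ∑ k ∈ Finset.Ico 1 p, (k : ℤ) = (p : ℤ) * ((p : ℤ) - 1) := by
    have h1 : ∑ k ∈ Finset.Ico 0 p, (k : ℤ) = (0 : ℤ) + ∑ k ∈ Finset.Ico 1 p, (k : ℤ) :=
      Finset.sum_eq_sum_Ico_succ_bot hp0 _
    have h2 : (∑ i ∈ Finset.range p, i) * 2 = p * (p - 1) := Finset.sum_range_id_mul_two p
    have h3 : ∑ k ∈ Finset.Ico 0 p, (k : ℤ) = ∑ k ∈ Finset.range p, (k : ℤ) := by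
      rw [Finset.range_eq_Ico]
    have h4 : (∑ k ∈ Finset.range p, (k : ℤ)) * 2 = (p : ℤ) * ((p : ℤ) - 1) := by
      have := congrArg (fun n : ℕ => (n : ℤ)) h2
      push_cast [Nat.cast_sub hp0] at this
      exact this
    linarith [h1, h3, h4]
  -- final assembly
  have hsub : ∑ k ∈ Finset.Ico 1 p, ((k : ℤ) ^ p - k)
      = (∑ k ∈ Finset.Ico 1 p, (k : ℤ) ^ p) - ∑ k ∈ Finset.Ico 1 p, (k : ℤ) :=
    Finset.sum_sub_distrib _ _
  have hoddZ : Odd (p : ℤ) := by exact_mod_cast hodd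
  have h2c : (2 : ℤ) * (((p : ℤ) + 1) / 2) = (p : ℤ) + 1 :=
    Int.two_mul_ediv_two_of_even hoddZ.add_one
  have e : (p : ℤ) * (2 * S - ((p : ℤ) + 1))
      = 2 * (∑ k ∈ Finset.Ico 1 p, (k : ℤ) ^ p) - 2 * (p : ℤ) ^ 2 := by
    linear_combination 2 * hA + 2 * hsub - hgauss
  have hkey : (p : ℤ) * (p : ℤ) ∣ (p : ℤ) * (2 * S - ((p : ℤ) + 1)) := by
    rw [e, ← sq]
    exact dvd_sub hpow ⟨2, by ring⟩
  have hpz : (p : ℤ) ≠ 0 := by exact_mod_cast hp0.ne'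
  have hdvd2 : (p : ℤ) ∣ 2 * S - ((p : ℤ) + 1) := (mul_dvd_mul_iff_left hpz).mp hkey
  have hmod2 : 2 * S ≡ 2 * (((p : ℤ) + 1) / 2) [ZMOD (p : ℤ)] := by
    rw [h2c]
    exact (Int.ModEq.symm (Int.modEq_iff_dvd.mpr hdvd2))
  have hgcd : Int.gcd (p : ℤ) 2 = 1 := by
    have hnd : ¬ (2 ∣ p) := by
      have := Nat.odd_iff.mp hodd
      omega
    have hc : Nat.Coprime 2 p := (Nat.prime_two.coprime_iff_not_dvd).mpr hnd
    simpa [Int.gcd, Nat.gcd_comm] using hc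
  have hfin := Int.ModEq.cancel_left_div_gcd (show (0 : ℤ) < p by exact_mod_cast hp0) hmod2
  rw [hgcd] at hfin
  simpa using hfin
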